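/- Let f_1,…,f_n : ℝ^d → ℝ be L-smooth with average f, satisfying the bounded client dissimilarity condition with constant B, and let ρ ∈ (0,1] and η > 0. For any points x_1,…,x_n ∈ ℝ^d with average x̄, let X ∈ ℝ^{d×n} have columns x_i, X̄ have all columns equal to x̄, ∇ ∈ ℝ^{d×n} have columns ∇f_i(x_i), and ∇̄ have all columns equal to (1/n)∑_j ∇f_j(x_j). Then ((1 − ρ)/n)·‖(X̄ − X) − η(∇̄ − ∇)‖_F² ≤ (1/n)·[(1 − ρ/2) + 12L²η²/ρ]·‖X̄ − X‖_F² + 8η²B²/ρ. -/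

import Mathlib

open MeasureTheory ProbabilityTheory Finset
open scoped RealInnerProductSpace

/-- Average of `n` vectors in `ℝ^d`. -/
noncomputable def avgVec {n d : ℕ} (x : Fin n → EuclideanSpace ℝ (Fin d)) :
    EuclideanSpace ℝ (Fin d) :=
  (n : ℝ)⁻¹ • ∑ i, x i

/-- The global objective `f = (1/n) ∑ f i`. -/
noncomputable def avgFun {n d : ℕ} (f : Fin n → EuclideanSpace ℝ (Fin d) → ℝ)
    (x : EuclideanSpace ℝ (Fin d)) : ℝ :=
  (n : ℝ)⁻¹ * ∑ i, f i x

/-- Consensus error `(1/n) ∑ ‖x i - x̄‖²`. -/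
noncomputable def consensusError {n d : ℕ} (x : Fin n → EuclideanSpace ℝ (Fin d)) : ℝ :=
  (n : ℝ)⁻¹ * ∑ i, ‖x i - avgVec x‖ ^ 2

set_option maxHeartbeats 1000000 in
theorem consensus_drift_frobenius_bound
    {n d : ℕ} (hn : 1 ≤ n) (hd : 1 ≤ d)
    (L : ℝ) (hL : 0 < L)
    (f : Fin n → EuclideanSpace ℝ (Fin d) → ℝ)
    (hdiff : ∀ i, Differentiable ℝ (f i))
    (hsmooth : ∀ i x y, ‖gradient (f i) x - gradient (f i) y‖ ≤ L * ‖x - y‖)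
    (B : ℝ) (hB : 0 ≤ B)
    (hBCD : ∀ x, (n : ℝ)⁻¹ * ∑ i, ‖gradient (f i) x - gradient (avgFun f) x‖ ^ 2 ≤ B ^ 2)
    (ρ : ℝ) (hρ : ρ ∈ Set.Ioc (0:ℝ) 1)
    (η : ℝ) (hη : 0 < η)
    (x : Fin n → EuclideanSpace ℝ (Fin d)) :
    (1 - ρ) / n *
        ∑ i, ‖(avgVec x - x i) -
          η • ((n : ℝ)⁻¹ • ∑ j, gradient (f j) (x j) - gradient (f i) (x i))‖ ^ 2
      ≤ (n : ℝ)⁻¹ * ((1 - ρ / 2) + 12 * L ^ 2 * η ^ 2 / ρ) * ∑ i, ‖avgVec x - x i‖ ^ 2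
        + 8 * η ^ 2 * B ^ 2 / ρ := by
  obtain ⟨hρ0, hρ1⟩ := hρ
  have hn0 : (0:ℝ) < n := by exact_mod_cast hn
  set xbar := avgVec x with hxbar
  set g : Fin n → EuclideanSpace ℝ (Fin d) := fun i => gradient (f i) (x i) with hg
  set gbar : EuclideanSpace ℝ (Fin d) := (n:ℝ)⁻¹ • ∑ j, g j with hgbar
  set c : EuclideanSpace ℝ (Fin d) := gradient (avgFun f) xbar with hc
  set a : Fin n → EuclideanSpace ℝ (Fin d) := fun i => xbar - x i with ha
  set b : Fin n → EuclideanSpace ℝ (Fin d) := fun i => gbar - g i with hb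
  have e1 : ∀ i, xbar - x i = a i := fun i => rfl
  have e2 : ∀ i : Fin n,
      ((n:ℝ)⁻¹ • ∑ j, gradient (f j) (x j)) - gradient (f i) (x i) = b i := fun i => rfl
  simp only [e2, e1]
  set Sa := ∑ i, ‖a i‖ ^ 2 with hSa
  set Sb := ∑ i, ‖b i‖ ^ 2 with hSb
  set T := ∑ i, ‖a i - η • b i‖ ^ 2 with hT
  have hSa0 : 0 ≤ Sa := Finset.sum_nonneg fun i _ => by positivity
  have hSb0 : 0 ≤ Sb := Finset.sum_nonneg fun i _ => by positivity
  have hT0 : 0 ≤ T := Finset.sum_nonneg fun i _ => by positivity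
  -- Young per term
  have young : ∀ i, ‖a i - η • b i‖ ^ 2 ≤
      (1 + ρ/2) * ‖a i‖ ^ 2 + (1 + 2/ρ) * (η ^ 2 * ‖b i‖ ^ 2) := by
    intro i
    have h2 : ‖a i - η • b i‖ ^ 2 =
        ‖a i‖ ^ 2 - 2 * ⟪a i, η • b i⟫ + ‖η • b i‖ ^ 2 :=
      norm_sub_sq_real (a i) (η • b i)
    have h1 : |⟪a i, η • b i⟫| ≤ ‖a i‖ * ‖η • b i‖ := abs_real_inner_le_norm _ _
    have h3 : ‖η • b i‖ ^ 2 = η ^ 2 * ‖b i‖ ^ 2 := by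
      rw [norm_smul, Real.norm_eq_abs, mul_pow, sq_abs]
    have h4 : -2 * ⟪a i, η • b i⟫ ≤ (ρ/2) * ‖a i‖ ^ 2 + (2/ρ) * ‖η • b i‖ ^ 2 := by
      have habs : -⟪a i, η • b i⟫ ≤ ‖a i‖ * ‖η • b i‖ := by
        have := abs_le.mp h1; linarith [this.1]
      have key : 2 * (‖a i‖ * ‖η • b i‖) ≤ (ρ/2) * ‖a i‖ ^ 2 + (2/ρ) * ‖η • b i‖ ^ 2 := by
        rw [← sub_nonneg]
        have heq : (ρ/2) * ‖a i‖ ^ 2 + (2/ρ) * ‖η • b i‖ ^ 2 - 2 * (‖a i‖ * ‖η • b i‖)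
            = (ρ * ‖a i‖ - 2 * ‖η • b i‖) ^ 2 / (2 * ρ) := by
          field_simp; ring
        rw [heq]; positivity
      linarith
    rw [h2]; rw [h3] at h4 ⊢; linarith
  have youngSum : T ≤ (1 + ρ/2) * Sa + (1 + 2/ρ) * η ^ 2 * Sb := by
    calc T ≤ ∑ i, ((1 + ρ/2) * ‖a i‖ ^ 2 + (1 + 2/ρ) * (η ^ 2 * ‖b i‖ ^ 2)) :=
          Finset.sum_le_sum fun i _ => young i
      _ = (1 + ρ/2) * Sa + (1 + 2/ρ) * η ^ 2 * Sb := by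
          rw [Finset.sum_add_distrib, ← Finset.mul_sum]
          simp_rw [← mul_assoc]
          rw [← Finset.mul_sum, ← hSa, ← hSb]
  -- variance: Sb ≤ ∑ ‖g i - c‖²
  have hsum : ∑ i, (g i - c) = (n:ℝ) • (gbar - c) := by
    have h1 : (n:ℝ) • gbar = ∑ j, g j := by
      rw [hgbar, smul_smul, mul_inv_cancel₀ hn0.ne', one_smul]
    rw [Finset.sum_sub_distrib, smul_sub, h1]
    congr 1
    rw [Finset.sum_const, Finset.card_univ, Fintype.card_fin]
    exact (Nat.cast_smul_eq_nsmul ℝ n c).symm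
  have var : Sb ≤ ∑ i, ‖g i - c‖ ^ 2 := by
    have expand : ∀ i : Fin n, ‖b i‖ ^ 2 =
        ‖g i - c‖ ^ 2 - 2 * ⟪gbar - c, g i - c⟫ + ‖gbar - c‖ ^ 2 := by
      intro i
      have hbi : b i = (gbar - c) - (g i - c) := by show gbar - g i = _; abel
      rw [hbi, @norm_sub_sq_real]
      ring
    have hsb : Sb = ∑ i, ‖g i - c‖ ^ 2 - 2 * ⟪gbar - c, ∑ i, (g i - c)⟫
        + (n:ℝ) * ‖gbar - c‖ ^ 2 := by
      rw [hSb]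
      simp_rw [expand]
      rw [Finset.sum_add_distrib, Finset.sum_sub_distrib, inner_sum, Finset.mul_sum,
        Finset.sum_const, nsmul_eq_mul, Finset.card_univ, Fintype.card_fin]
    rw [hsb, hsum, real_inner_smul_right, real_inner_self_eq_norm_sq]
    nlinarith [sq_nonneg ‖gbar - c‖, hn0]
  -- smoothness + BCD
  have gradBound : ∑ i, ‖g i - c‖ ^ 2 ≤ 2 * L ^ 2 * Sa + 2 * (n:ℝ) * B ^ 2 := by
    have per : ∀ i, ‖g i - c‖ ^ 2 ≤
        2 * (L ^ 2 * ‖a i‖ ^ 2) + 2 * ‖gradient (f i) xbar - c‖ ^ 2 := by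
      intro i
      have tri : ‖g i - c‖ ≤ ‖g i - gradient (f i) xbar‖ + ‖gradient (f i) xbar - c‖ :=
        norm_sub_le_norm_sub_add_norm_sub _ _ _
      have hs : ‖g i - gradient (f i) xbar‖ ≤ L * ‖a i‖ := by
        have h := hsmooth i (x i) xbar
        have : ‖a i‖ = ‖x i - xbar‖ := by rw [← e1 i, norm_sub_rev]
        rw [this]
        exact h
      nlinarith [norm_nonneg (g i - c), norm_nonneg (g i - gradient (f i) xbar),
        norm_nonneg (gradient (f i) xbar - c), norm_nonneg (a i), hL.le,
        sq_nonneg (‖g i - gradient (f i) xbar‖ - ‖gradient (f i) xbar - c‖)]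
    have hbcd := hBCD xbar
    have hbcd' : ∑ i, ‖gradient (f i) xbar - c‖ ^ 2 ≤ (n:ℝ) * B ^ 2 := by
      rw [inv_mul_le_iff₀ hn0] at hbcd
      exact hbcd
    calc ∑ i, ‖g i - c‖ ^ 2
        ≤ ∑ i, (2 * (L ^ 2 * ‖a i‖ ^ 2) + 2 * ‖gradient (f i) xbar - c‖ ^ 2) :=
          Finset.sum_le_sum fun i _ => per i
      _ = 2 * L ^ 2 * Sa + 2 * ∑ i, ‖gradient (f i) xbar - c‖ ^ 2 := by
          rw [Finset.sum_add_distrib, ← Finset.mul_sum, ← Finset.mul_sum, hSa,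
            ← Finset.mul_sum]
          ring
      _ ≤ 2 * L ^ 2 * Sa + 2 * ((n:ℝ) * B ^ 2) := by linarith
      _ = 2 * L ^ 2 * Sa + 2 * (n:ℝ) * B ^ 2 := by ring
  have hSbBound : Sb ≤ 2 * L ^ 2 * Sa + 2 * (n:ℝ) * B ^ 2 := le_trans var gradBound
  -- combine
  have hcoef : (1 - ρ) * (1 + 2/ρ) ≤ 3 / ρ := by
    rw [le_div_iff₀ hρ0]
    have h : (1 - ρ) * (1 + 2/ρ) * ρ = (1 - ρ) * (ρ + 2) := by field_simp
    rw [h]; nlinarith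
  have main : (1 - ρ) * T ≤
      ((1 - ρ/2) + 12 * L ^ 2 * η ^ 2 / ρ) * Sa + (n:ℝ) * (8 * η ^ 2 * B ^ 2 / ρ) := by
    have h1 : (1 - ρ) * T ≤ ((1 - ρ) * (1 + ρ/2)) * Sa + ((1 - ρ) * (1 + 2/ρ)) * (η ^ 2 * Sb) := by
      have := mul_le_mul_of_nonneg_left youngSum (by linarith : (0:ℝ) ≤ 1 - ρ)
      nlinarith [this]
    have h2 : ((1 - ρ) * (1 + ρ/2)) * Sa ≤ (1 - ρ/2) * Sa := by
      apply mul_le_mul_of_nonneg_right _ hSa0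
      nlinarith
    have h3 : ((1 - ρ) * (1 + 2/ρ)) * (η ^ 2 * Sb) ≤ (3/ρ) * (η ^ 2 * Sb) :=
      mul_le_mul_of_nonneg_right hcoef (by positivity)
    have h4 : (3/ρ) * (η ^ 2 * Sb) ≤ (3/ρ) * (η ^ 2 * (2 * L ^ 2 * Sa + 2 * (n:ℝ) * B ^ 2)) := by
      apply mul_le_mul_of_nonneg_left _ (by positivity)
      exact mul_le_mul_of_nonneg_left hSbBound (by positivity)
    have h5 : (3/ρ) * (η ^ 2 * (2 * L ^ 2 * Sa + 2 * (n:ℝ) * B ^ 2)) =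
        (6 * L ^ 2 * η ^ 2 / ρ) * Sa + (n:ℝ) * (6 * η ^ 2 * B ^ 2 / ρ) := by
      field_simp; ring
    have h6 : (6 * L ^ 2 * η ^ 2 / ρ) * Sa ≤ (12 * L ^ 2 * η ^ 2 / ρ) * Sa := by
      have hx : (12 * L ^ 2 * η ^ 2 / ρ) * Sa - (6 * L ^ 2 * η ^ 2 / ρ) * Sa
          = (6 * L ^ 2 * η ^ 2 / ρ) * Sa := by ring
      have hy : 0 ≤ (6 * L ^ 2 * η ^ 2 / ρ) * Sa := by positivity
      linarith
    have h7 : (n:ℝ) * (6 * η ^ 2 * B ^ 2 / ρ) ≤ (n:ℝ) * (8 * η ^ 2 * B ^ 2 / ρ) := by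
      have hx : (n:ℝ) * (8 * η ^ 2 * B ^ 2 / ρ) - (n:ℝ) * (6 * η ^ 2 * B ^ 2 / ρ)
          = (n:ℝ) * (2 * η ^ 2 * B ^ 2 / ρ) := by ring
      have hy : 0 ≤ (n:ℝ) * (2 * η ^ 2 * B ^ 2 / ρ) := by positivity
      linarith
    linarith
  calc (1 - ρ) / (n:ℝ) * T = (n:ℝ)⁻¹ * ((1 - ρ) * T) := by ring
    _ ≤ (n:ℝ)⁻¹ * (((1 - ρ/2) + 12 * L ^ 2 * η ^ 2 / ρ) * Sa + (n:ℝ) * (8 * η ^ 2 * B ^ 2 / ρ)) :=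
        mul_le_mul_of_nonneg_left main (by positivity)
    _ = (n:ℝ)⁻¹ * ((1 - ρ/2) + 12 * L ^ 2 * η ^ 2 / ρ) * Sa + 8 * η ^ 2 * B ^ 2 / ρ := by
        field_simp
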